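/- Genus-zero lemma for spanning subgraphs. Let G = (H, σ, θ) be a combinatorial map encoding an orientable ribbon graph. If k(E) − bc(E) + n(E) = 0 (i.e., the surface G has genus zero), then k(F) − bc(F) + n(F) = 0 for every subset F ⊆ E. -/

import Mathlib

open Finset
open scoped Classical

/-- The permutation `θ_F` acting as `θ` on the half-edges belonging to edges of the
spanning subgraph (encoded by the `θ`-invariant set `S` of half-edges) and as the
identity elsewhere.  Defined whenever `S` is `θ`-invariant and `θ` is an involution
(and as the identity permutation otherwise). -/
noncomputable def restrictPerm {H : Type*} [DecidableEq H] (θ : Equiv.Perm H) (S : Finset H) :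
    Equiv.Perm H :=
  if hcl : (∀ a ∈ S, θ a ∈ S) ∧ (∀ a, θ (θ a) = a) then
    { toFun := fun a => if a ∈ S then θ a else a
      invFun := fun a => if a ∈ S then θ a else a
      left_inv := fun a => by
        by_cases h : a ∈ S
        · simp [h, hcl.1 a h, hcl.2 a]
        · simp [h]
      right_inv := fun a => by
        by_cases h : a ∈ S
        · simp [h, hcl.1 a h, hcl.2 a]
        · simp [h] }
  else 1

/-- The number of orbits of the cyclic group generated by a permutation. -/
noncomputable def permOrbits {H : Type*} [Fintype H] (π : Equiv.Perm H) : ℕ :=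
  Nat.card (MulAction.orbitRel.Quotient (Subgroup.zpowers π) H)

/-- `v(G)`: the number of vertices, i.e. the number of orbits of `σ`. -/
noncomputable def vCount {H : Type*} [Fintype H] (σ : Equiv.Perm H) : ℕ := permOrbits σ

/-- `bc(F)`: the number of boundary components of the spanning subgraph, i.e. the
number of orbits of `σ ∘ θ_F`. -/
noncomputable def bcCount {H : Type*} [Fintype H] [DecidableEq H]
    (σ θ : Equiv.Perm H) (S : Finset H) : ℕ :=
  permOrbits (σ * restrictPerm θ S)

/-- `k(F)`: the number of connected components of the spanning subgraph, i.e. the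
number of orbits of the subgroup generated by `σ` and `θ_F`. -/
noncomputable def kCount {H : Type*} [Fintype H] [DecidableEq H]
    (σ θ : Equiv.Perm H) (S : Finset H) : ℕ :=
  Nat.card (MulAction.orbitRel.Quotient
    (Subgroup.closure {σ, restrictPerm θ S} : Subgroup (Equiv.Perm H)) H)

/-- `e(F)`: the number of edges of the spanning subgraph, i.e. half the number of
half-edges in `S` (as an integer, for use in exponents). -/
def eCount {H : Type*} (S : Finset H) : ℤ := (S.card / 2 : ℕ)

/-- `r(F) = v(G) - k(F)`: the rank of the spanning subgraph. -/
noncomputable def rCount {H : Type*} [Fintype H] [DecidableEq H]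
    (σ θ : Equiv.Perm H) (S : Finset H) : ℤ :=
  (vCount σ : ℤ) - (kCount σ θ S : ℤ)

/-- `n(F) = e(F) - r(F)`: the nullity of the spanning subgraph. -/
noncomputable def nCount {H : Type*} [Fintype H] [DecidableEq H]
    (σ θ : Equiv.Perm H) (S : Finset H) : ℤ :=
  eCount S - rCount σ θ S

/-- The spanning subgraphs `F ⊆ E`, encoded as the `θ`-invariant subsets of the
set of half-edges. -/
def spanningSets {H : Type*} [Fintype H] [DecidableEq H] (θ : Equiv.Perm H) :
    Finset (Finset H) :=
  Finset.univ.filter (fun S => ∀ a ∈ S, θ a ∈ S)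

set_option linter.unusedSectionVars false

section Aux
variable {H : Type*} [Fintype H] [DecidableEq H]

/-- The same-cycle setoid of a permutation. -/
def scSetoid (π : Equiv.Perm H) : Setoid H :=
  ⟨π.SameCycle, ⟨fun x => Equiv.Perm.SameCycle.refl π x,
    fun h => h.symm, fun h h' => h.trans h'⟩⟩

lemma orbitRel_zpowers_eq (π : Equiv.Perm H) :
    MulAction.orbitRel (Subgroup.zpowers π) H = scSetoid π := by
  apply Setoid.ext
  intro x y
  constructor
  · rintro ⟨⟨g, hg⟩, h'⟩
    obtain ⟨n, rfl⟩ := Subgroup.mem_zpowers_iff.mp hg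
    exact Equiv.Perm.SameCycle.symm ⟨n, h'⟩
  · intro h
    obtain ⟨n, hn⟩ := h.symm
    exact ⟨⟨π ^ n, Subgroup.mem_zpowers_iff.mpr ⟨n, rfl⟩⟩, hn⟩

lemma permOrbits_sc (π : Equiv.Perm H) :
    permOrbits π = Nat.card (Quotient (scSetoid π)) := by
  unfold permOrbits MulAction.orbitRel.Quotient
  rw [orbitRel_zpowers_eq]

lemma sameCycle_iff_pow (π : Equiv.Perm H) (x y : H) :
    π.SameCycle x y ↔ ∃ n : ℕ, (π ^ n) x = y := by
  constructor
  · intro h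
    obtain ⟨i, _, hi⟩ := h.exists_pow_eq'
    exact ⟨i, hi⟩
  · rintro ⟨n, rfl⟩
    exact ⟨(n : ℤ), by simp [zpow_natCast]⟩

lemma pow_mulSwap_eq (π : Equiv.Perm H) (a b x : H) (n : ℕ)
    (h : ∀ m, m < n → (π ^ m) x ≠ a ∧ (π ^ m) x ≠ b) :
    ((π * Equiv.swap a b) ^ n) x = (π ^ n) x := by
  induction n with
  | zero => rfl
  | succ n ih =>
    have h1 := ih (fun m hm => h m (hm.trans (Nat.lt_succ_self n)))
    have h2 := h n (Nat.lt_succ_self n)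
    simp only [pow_succ', Equiv.Perm.mul_apply]
    rw [h1, Equiv.swap_apply_of_ne_of_ne h2.1 h2.2]

lemma pow_mulSwap_eq' (π : Equiv.Perm H) (a b x : H)
    (h : ∀ m : ℕ, (π ^ m) x ≠ a ∧ (π ^ m) x ≠ b) (n : ℕ) :
    ((π * Equiv.swap a b) ^ n) x = (π ^ n) x :=
  pow_mulSwap_eq π a b x n (fun m _ => h m)

lemma avoid_pows (π : Equiv.Perm H) (a b x : H)
    (ha : ¬ π.SameCycle x a) (hb : ¬ π.SameCycle x b) :
    ∀ m : ℕ, (π ^ m) x ≠ a ∧ (π ^ m) x ≠ b := fun m =>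
  ⟨fun hc => ha ((sameCycle_iff_pow π x a).mpr ⟨m, hc⟩),
   fun hc => hb ((sameCycle_iff_pow π x b).mpr ⟨m, hc⟩)⟩

lemma sameCycle_mulSwap_iff (π : Equiv.Perm H) (a b x : H)
    (ha : ¬ π.SameCycle x a) (hb : ¬ π.SameCycle x b) (y : H) :
    (π * Equiv.swap a b).SameCycle x y ↔ π.SameCycle x y := by
  have h := avoid_pows π a b x ha hb
  rw [sameCycle_iff_pow, sameCycle_iff_pow]
  constructor
  · rintro ⟨n, hn⟩
    exact ⟨n, by rw [← pow_mulSwap_eq' π a b x h n]; exact hn⟩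
  · rintro ⟨n, hn⟩
    exact ⟨n, by rw [pow_mulSwap_eq' π a b x h n]; exact hn⟩

lemma sameCycle_mulSwap_of_not (π : Equiv.Perm H) (a b : H)
    (h : ¬ π.SameCycle a b) :
    (π * Equiv.swap a b).SameCycle a b := by
  have hbx : π.SameCycle (π b) b := ⟨-1, by simp⟩
  have hex : ∃ n : ℕ, (π ^ n) (π b) = a ∨ (π ^ n) (π b) = b := by
    obtain ⟨n, hn⟩ := (sameCycle_iff_pow π (π b) b).mp hbx
    exact ⟨n, Or.inr hn⟩
  have hmin : ∀ m, m < Nat.find hex →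
      (π ^ m) (π b) ≠ a ∧ (π ^ m) (π b) ≠ b := by
    intro m hm
    have := Nat.find_min hex hm
    push_neg at this
    exact this
  have heq := pow_mulSwap_eq π a b (π b) (Nat.find hex) hmin
  have hxb : (π ^ Nat.find hex) (π b) = b := by
    rcases Nat.find_spec hex with h1 | h1
    · exact absurd ((((sameCycle_iff_pow π (π b) a).mpr ⟨_, h1⟩).symm.trans hbx)) h
    · exact h1
  refine (sameCycle_iff_pow _ a b).mpr ⟨Nat.find hex + 1, ?_⟩
  have hstep : ((π * Equiv.swap a b) ^ (Nat.find hex + 1)) a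
      = ((π * Equiv.swap a b) ^ Nat.find hex) ((π * Equiv.swap a b) a) := by
    rw [pow_succ, Equiv.Perm.mul_apply]
  rw [hstep]
  have h2 : (π * Equiv.swap a b) a = π b := by
    rw [Equiv.Perm.mul_apply, Equiv.swap_apply_left]
  rw [h2, heq, hxb]
end Aux
section Aux2
variable {H : Type*} [Fintype H] [DecidableEq H]

lemma quot_mk_eq_iff {g : Equiv.Perm H} (q : Quotient (scSetoid g)) (z : H) :
    q = Quotient.mk (scSetoid g) z ↔ g.SameCycle q.out z := by
  constructor
  · intro h
    have h2 : Quotient.mk (scSetoid g) q.out = Quotient.mk (scSetoid g) z := by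
      rw [Quotient.out_eq, h]
    exact Quotient.exact h2
  · intro h
    rw [← Quotient.out_eq q]
    exact Quotient.sound h

lemma permOrbits_mul_swap_le (π : Equiv.Perm H) (a b : H) :
    permOrbits (π * Equiv.swap a b) ≤ permOrbits π + 1 := by
  set g := π * Equiv.swap a b with hg
  have hπ : g * Equiv.swap a b = π := by
    rw [hg, mul_assoc, Equiv.swap_mul_self, mul_one]
  have transfer : ∀ x : H, ¬ g.SameCycle x a → ¬ g.SameCycle x b →
      ∀ y, (π.SameCycle x y ↔ g.SameCycle x y) := by
    intro x hxa hxb y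
    rw [← hπ]
    exact sameCycle_mulSwap_iff g a b x hxa hxb y
  rw [permOrbits_sc, permOrbits_sc, ← Finite.card_option]
  apply Nat.card_le_card_of_injective (fun q : Quotient (scSetoid g) =>
    if q = Quotient.mk (scSetoid g) a then none
    else if q = Quotient.mk (scSetoid g) b then some (Quotient.mk (scSetoid π) b)
    else some (Quotient.mk (scSetoid π) q.out))
  intro q q' hqq'
  simp only at hqq'
  by_cases h1 : q = Quotient.mk (scSetoid g) a <;>
    by_cases h2 : q' = Quotient.mk (scSetoid g) a
  · rw [h1, h2]
  · rw [if_pos h1, if_neg h2] at hqq'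
    by_cases h4 : q' = Quotient.mk (scSetoid g) b <;> simp [h4] at hqq'
  · rw [if_neg h1, if_pos h2] at hqq'
    by_cases h3 : q = Quotient.mk (scSetoid g) b <;> simp [h3] at hqq'
  · rw [if_neg h1, if_neg h2] at hqq'
    by_cases h3 : q = Quotient.mk (scSetoid g) b <;>
      by_cases h4 : q' = Quotient.mk (scSetoid g) b
    · rw [h3, h4]
    · rw [if_pos h3, if_neg h4, Option.some_inj] at hqq'
      have hπrel : π.SameCycle q'.out b := Quotient.exact hqq'.symm
      have hga : ¬ g.SameCycle q'.out a := fun hc => h2 ((quot_mk_eq_iff q' a).mpr hc)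
      have hgb : ¬ g.SameCycle q'.out b := fun hc => h4 ((quot_mk_eq_iff q' b).mpr hc)
      exact absurd ((transfer q'.out hga hgb b).mp hπrel) hgb
    · rw [if_neg h3, if_pos h4, Option.some_inj] at hqq'
      have hπrel : π.SameCycle q.out b := Quotient.exact hqq'
      have hga : ¬ g.SameCycle q.out a := fun hc => h1 ((quot_mk_eq_iff q a).mpr hc)
      have hgb : ¬ g.SameCycle q.out b := fun hc => h3 ((quot_mk_eq_iff q b).mpr hc)
      exact absurd ((transfer q.out hga hgb b).mp hπrel) hgb
    · rw [if_neg h3, if_neg h4, Option.some_inj] at hqq'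
      have hπrel : π.SameCycle q.out q'.out := Quotient.exact hqq'
      have hga : ¬ g.SameCycle q.out a := fun hc => h1 ((quot_mk_eq_iff q a).mpr hc)
      have hgb : ¬ g.SameCycle q.out b := fun hc => h3 ((quot_mk_eq_iff q b).mpr hc)
      have hrel : g.SameCycle q.out q'.out := (transfer _ hga hgb _).mp hπrel
      rw [← Quotient.out_eq q, ← Quotient.out_eq q']
      exact Quotient.sound hrel

lemma permOrbits_mul_swap_add_one_le (π : Equiv.Perm H) (a b : H)
    (h : ¬ π.SameCycle a b) :
    permOrbits (π * Equiv.swap a b) + 1 ≤ permOrbits π := by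
  set g := π * Equiv.swap a b with hg
  have hπ : g * Equiv.swap a b = π := by
    rw [hg, mul_assoc, Equiv.swap_mul_self, mul_one]
  have transfer : ∀ x : H, ¬ g.SameCycle x a → ¬ g.SameCycle x b →
      ∀ y, (π.SameCycle x y ↔ g.SameCycle x y) := by
    intro x hxa hxb y
    rw [← hπ]
    exact sameCycle_mulSwap_iff g a b x hxa hxb y
  have hgab : g.SameCycle a b := sameCycle_mulSwap_of_not π a b h
  have hmkab : Quotient.mk (scSetoid g) a = Quotient.mk (scSetoid g) b :=
    Quotient.sound hgab
  rw [permOrbits_sc, permOrbits_sc, ← Finite.card_option]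
  apply Nat.card_le_card_of_injective
    (fun o : Option (Quotient (scSetoid g)) =>
      o.elim (Quotient.mk (scSetoid π) a) (fun q =>
        if q = Quotient.mk (scSetoid g) a then Quotient.mk (scSetoid π) b
        else Quotient.mk (scSetoid π) q.out))
  have havoid : ∀ q : Quotient (scSetoid g), q ≠ Quotient.mk (scSetoid g) a →
      (¬ g.SameCycle q.out a) ∧ (¬ g.SameCycle q.out b) := by
    intro q hq
    have h1 : ¬ g.SameCycle q.out a := fun hc => hq ((quot_mk_eq_iff q a).mpr hc)
    exact ⟨h1, fun hc => h1 (hc.trans hgab.symm)⟩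
  rintro (_ | q) (_ | q') hqq'
  · rfl
  · simp only [Option.elim] at hqq'
    by_cases h2 : q' = Quotient.mk (scSetoid g) a
    · rw [if_pos h2] at hqq'
      exact absurd (Quotient.exact hqq') h
    · rw [if_neg h2] at hqq'
      obtain ⟨hga, hgb⟩ := havoid q' h2
      have : π.SameCycle q'.out a := (Quotient.exact hqq'.symm)
      exact absurd ((transfer q'.out hga hgb a).mp this) (fun hc => hga hc)
  · simp only [Option.elim] at hqq'
    by_cases h2 : q = Quotient.mk (scSetoid g) a
    · rw [if_pos h2] at hqq'
      exact absurd (Quotient.exact hqq'.symm) h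
    · rw [if_neg h2] at hqq'
      obtain ⟨hga, hgb⟩ := havoid q h2
      have : π.SameCycle q.out a := (Quotient.exact hqq')
      exact absurd ((transfer q.out hga hgb a).mp this) (fun hc => hga hc)
  · simp only [Option.elim] at hqq'
    by_cases h2 : q = Quotient.mk (scSetoid g) a <;>
      by_cases h3 : q' = Quotient.mk (scSetoid g) a
    · rw [h2, h3]
    · rw [if_pos h2, if_neg h3] at hqq'
      obtain ⟨hga, hgb⟩ := havoid q' h3
      have : π.SameCycle q'.out b := Quotient.exact hqq'.symm
      exact absurd ((transfer q'.out hga hgb b).mp this) hgb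
    · rw [if_neg h2, if_pos h3] at hqq'
      obtain ⟨hga, hgb⟩ := havoid q h2
      have : π.SameCycle q.out b := Quotient.exact hqq'
      exact absurd ((transfer q.out hga hgb b).mp this) hgb
    · rw [if_neg h2, if_neg h3] at hqq'
      obtain ⟨hga, hgb⟩ := havoid q h2
      have hπrel : π.SameCycle q.out q'.out := Quotient.exact hqq'
      have hrel : g.SameCycle q.out q'.out := (transfer _ hga hgb _).mp hπrel
      congr 1
      rw [← Quotient.out_eq q, ← Quotient.out_eq q']
      exact Quotient.sound hrel
end Aux2
section Aux3
variable {H : Type*} [Fintype H] [DecidableEq H]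

lemma card_quot_le_of_imp {r s : Setoid H} (h : ∀ x y, r x y → s x y) :
    Nat.card (Quotient s) ≤ Nat.card (Quotient r) := by
  apply Nat.card_le_card_of_surjective
    (Quotient.lift (fun x => Quotient.mk s x)
      (fun x y hxy => Quotient.sound (h x y hxy)))
  intro q
  obtain ⟨x, rfl⟩ := Quotient.exists_rep q
  exact ⟨Quotient.mk r x, rfl⟩

lemma card_quot_le_succ {r s : Setoid H} (a b : H)
    (h1 : ∀ x y, r x y → s x y)
    (h2 : ∀ x y, s x y →
      r x y ∨ (r x a ∧ r b y) ∨ (r x b ∧ r a y)) :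
    Nat.card (Quotient r) ≤ Nat.card (Quotient s) + 1 := by
  rw [← Finite.card_option]
  apply Nat.card_le_card_of_injective (fun q : Quotient r =>
    if q = Quotient.mk r b then none
    else some (Quotient.lift (fun x => Quotient.mk s x)
      (fun x y hxy => Quotient.sound (h1 x y hxy)) q))
  intro q q' hqq'
  simp only at hqq'
  by_cases hq : q = Quotient.mk r b <;> by_cases hq' : q' = Quotient.mk r b
  · rw [hq, hq']
  · rw [if_pos hq, if_neg hq'] at hqq'; exact absurd hqq' (by simp)
  · rw [if_neg hq, if_pos hq'] at hqq'; exact absurd hqq' (by simp)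
  · rw [if_neg hq, if_neg hq', Option.some_inj] at hqq'
    obtain ⟨x, rfl⟩ := Quotient.exists_rep q
    obtain ⟨y, rfl⟩ := Quotient.exists_rep q'
    simp only [Quotient.lift_mk] at hqq'
    have hs : s x y := Quotient.exact hqq'
    rcases h2 x y hs with h3 | ⟨h3, h4⟩ | ⟨h3, h4⟩
    · exact Quotient.sound h3
    · exact absurd ((Quotient.sound h4 : Quotient.mk r b = _).symm) hq'
    · exact absurd (Quotient.sound h3) hq

/-- The setoid obtained from `r` by merging the classes of `a` and `b`. -/
def joinPair (r : Setoid H) (a b : H) : Setoid H where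
  r x y := r x y ∨ (r x a ∧ r b y) ∨ (r x b ∧ r a y)
  iseqv := by
    constructor
    · intro x; exact Or.inl (r.iseqv.refl x)
    · rintro x y (h | ⟨h1, h2⟩ | ⟨h1, h2⟩)
      · exact Or.inl (r.iseqv.symm h)
      · exact Or.inr (Or.inr ⟨r.iseqv.symm h2, r.iseqv.symm h1⟩)
      · exact Or.inr (Or.inl ⟨r.iseqv.symm h2, r.iseqv.symm h1⟩)
    · rintro x y z (h | ⟨h1, h2⟩ | ⟨h1, h2⟩) (h' | ⟨h1', h2'⟩ | ⟨h1', h2'⟩)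
      · exact Or.inl (r.iseqv.trans h h')
      · exact Or.inr (Or.inl ⟨r.iseqv.trans h h1', h2'⟩)
      · exact Or.inr (Or.inr ⟨r.iseqv.trans h h1', h2'⟩)
      · exact Or.inr (Or.inl ⟨h1, r.iseqv.trans h2 h'⟩)
      · exact Or.inr (Or.inl ⟨h1, h2'⟩)
      · exact Or.inl (r.iseqv.trans h1 h2')
      · exact Or.inr (Or.inr ⟨h1, r.iseqv.trans h2 h'⟩)
      · exact Or.inl (r.iseqv.trans h1 h2')
      · exact Or.inr (Or.inr ⟨h1, h2'⟩)

lemma joinPair_rel {r : Setoid H} {a b x y : H} :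
    (joinPair r a b) x y ↔
      (r x y ∨ (r x a ∧ r b y) ∨ (r x b ∧ r a y)) :=
  Iff.rfl

lemma orbitRel_apply_mem {G : Subgroup (Equiv.Perm H)} {g : Equiv.Perm H}
    (hg : g ∈ G) (x : H) :
    (MulAction.orbitRel G H) x (g x) := by
  have h : (g x) ∈ MulAction.orbit G x := ⟨⟨g, hg⟩, rfl⟩
  exact (MulAction.orbitRel G H).iseqv.symm h

lemma orbitRel_closure_le (T : Set (Equiv.Perm H)) (s : Setoid H)
    (h : ∀ g ∈ T, ∀ x : H, s x (g x)) :
    ∀ x y, (MulAction.orbitRel (Subgroup.closure T) H) x y → s x y := by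
  have key : ∀ g ∈ Subgroup.closure T, ∀ x : H, s x (g x) := by
    intro g hg
    induction hg using Subgroup.closure_induction with
    | mem g hgT => exact h g hgT
    | one => intro x; exact s.iseqv.refl x
    | mul g g' _ _ ihg ihg' =>
      intro x
      have h1 := ihg' x
      have h2 := ihg (g' x)
      exact s.iseqv.trans h1 h2
    | inv g _ ihg =>
      intro x
      have h1 := ihg (g⁻¹ x)
      have h2 : g (g⁻¹ x) = x := by simp
      rw [h2] at h1
      exact s.iseqv.symm h1
  rintro x y ⟨⟨g, hg⟩, rfl⟩
  exact s.iseqv.symm (key g hg y)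
end Aux3
section Aux4
variable {H : Type*} [Fintype H] [DecidableEq H]

lemma restrictPerm_apply (θ : Equiv.Perm H) (S : Finset H)
    (h1 : ∀ x ∈ S, θ x ∈ S) (h2 : ∀ x, θ (θ x) = x) (x : H) :
    restrictPerm θ S x = if x ∈ S then θ x else x := by
  rw [restrictPerm, dif_pos ⟨h1, h2⟩]
  rfl

lemma theta_not_mem (θ : Equiv.Perm H) (S : Finset H)
    (hS : ∀ x ∈ S, θ x ∈ S) (hinv : ∀ x, θ (θ x) = x) {a : H} (ha : a ∉ S) :
    θ a ∉ S := by
  intro hmem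
  have := hS (θ a) hmem
  rw [hinv a] at this
  exact ha this

lemma insert_invariant (θ : Equiv.Perm H) (S : Finset H)
    (hS : ∀ x ∈ S, θ x ∈ S) (hinv : ∀ x, θ (θ x) = x) (a : H) :
    ∀ x ∈ insert (θ a) (insert a S), θ x ∈ insert (θ a) (insert a S) := by
  intro x hx
  rcases Finset.mem_insert.mp hx with rfl | hx
  · rw [hinv a]
    exact Finset.mem_insert_of_mem (Finset.mem_insert_self a S)
  rcases Finset.mem_insert.mp hx with rfl | hx
  · exact Finset.mem_insert_self _ _
  · exact Finset.mem_insert_of_mem (Finset.mem_insert_of_mem (hS x hx))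

lemma restrictPerm_insert (θ : Equiv.Perm H) (S : Finset H)
    (hS : ∀ x ∈ S, θ x ∈ S) (hinv : ∀ x, θ (θ x) = x)
    {a : H} (ha : a ∉ S) (hne : θ a ≠ a) :
    restrictPerm θ (insert (θ a) (insert a S)) =
      restrictPerm θ S * Equiv.swap a (θ a) := by
  have hb : θ a ∉ S := theta_not_mem θ S hS hinv ha
  have hS' := insert_invariant θ S hS hinv a
  ext x
  rw [restrictPerm_apply θ _ hS' hinv, Equiv.Perm.mul_apply,
    restrictPerm_apply θ S hS hinv]
  by_cases hxa : x = a
  · subst hxa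
    rw [Equiv.swap_apply_left, if_pos (by simp), if_neg hb]
  · by_cases hxb : x = θ a
    · subst hxb
      rw [Equiv.swap_apply_right, if_pos (Finset.mem_insert_self _ _), if_neg ha,
        hinv]
    · rw [Equiv.swap_apply_of_ne_of_ne hxa hxb]
      by_cases hxS : x ∈ S
      · rw [if_pos (by simp [hxS]), if_pos hxS]
      · rw [if_neg (by simp [hxa, hxb, hxS]), if_neg hxS]

/-- Twice the genus of the spanning subgraph `S`. -/
noncomputable def genusZ (σ θ : Equiv.Perm H) (S : Finset H) : ℤ :=
  (kCount σ θ S : ℤ) - (bcCount σ θ S : ℤ) + nCount σ θ S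

lemma genus_step (σ θ : Equiv.Perm H)
    (hinv : ∀ x, θ (θ x) = x) (hfp : ∀ x, θ x ≠ x)
    (S : Finset H) (hS : ∀ x ∈ S, θ x ∈ S) (a : H) (ha : a ∉ S) :
    genusZ σ θ S ≤ genusZ σ θ (insert (θ a) (insert a S)) := by
  have hab : a ≠ θ a := Ne.symm (hfp a)
  have hbS : θ a ∉ S := theta_not_mem θ S hS hinv ha
  set S' := insert (θ a) (insert a S) with hS'def
  have hS' : ∀ x ∈ S', θ x ∈ S' := insert_invariant θ S hS hinv a
  have hρ' : restrictPerm θ S' = restrictPerm θ S * Equiv.swap a (θ a) :=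
    restrictPerm_insert θ S hS hinv ha (hfp a)
  -- edge count
  have hcard : S'.card = S.card + 2 := by
    rw [hS'def, Finset.card_insert_of_notMem (by simp [hbS, Ne.symm hab]),
      Finset.card_insert_of_notMem ha]
  have he : eCount S' = eCount S + 1 := by
    unfold eCount
    rw [hcard, Nat.add_div_right _ (by norm_num)]
    push_cast
    ring
  -- membership facts
  have hσ1 : σ ∈ Subgroup.closure {σ, restrictPerm θ S} :=
    Subgroup.subset_closure (by simp)
  have hρ1 : restrictPerm θ S ∈ Subgroup.closure {σ, restrictPerm θ S} :=
    Subgroup.subset_closure (by simp)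
  have hσ2 : σ ∈ Subgroup.closure {σ, restrictPerm θ S'} :=
    Subgroup.subset_closure (by simp)
  have hρ2 : restrictPerm θ S' ∈ Subgroup.closure {σ, restrictPerm θ S'} :=
    Subgroup.subset_closure (by simp)
  -- applications of restrictPerm
  have happ : ∀ x ∈ S, restrictPerm θ S x = restrictPerm θ S' x := by
    intro x hx
    rw [restrictPerm_apply θ S hS hinv, restrictPerm_apply θ S' hS' hinv,
      if_pos hx, if_pos (by simp [hS'def, hx])]
  have happ2 : ∀ x, x ∉ S → restrictPerm θ S x = x := by
    intro x hx
    rw [restrictPerm_apply θ S hS hinv, if_neg hx]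
  have happa : restrictPerm θ S' a = θ a := by
    rw [restrictPerm_apply θ S' hS' hinv, if_pos (by simp [hS'def])]
  have happb : restrictPerm θ S' (θ a) = a := by
    rw [restrictPerm_apply θ S' hS' hinv, if_pos (by simp [hS'def]), hinv]
  -- r1 ≤ r2
  have hr12 : ∀ x y,
      (MulAction.orbitRel (Subgroup.closure {σ, restrictPerm θ S}) H) x y →
      (MulAction.orbitRel (Subgroup.closure {σ, restrictPerm θ S'}) H) x y := by
    apply orbitRel_closure_le
    intro g hg x
    simp only [Set.mem_insert_iff, Set.mem_singleton_iff] at hg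
    rcases hg with rfl | rfl
    · exact orbitRel_apply_mem hσ2 x
    · by_cases hxS : x ∈ S
      · rw [happ x hxS]
        exact orbitRel_apply_mem hρ2 x
      · rw [happ2 x hxS]
  have hk1 : kCount σ θ S' ≤ kCount σ θ S := card_quot_le_of_imp hr12
  have hbc' : bcCount σ θ S' =
      permOrbits ((σ * restrictPerm θ S) * Equiv.swap a (θ a)) := by
    unfold bcCount
    rw [hρ', ← mul_assoc]
  by_cases hsc : (σ * restrictPerm θ S).SameCycle a (θ a)
  · -- same boundary cycle: k stays, bc changes by at most one up
    have hbc : bcCount σ θ S' ≤ bcCount σ θ S + 1 := by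
      rw [hbc']
      exact permOrbits_mul_swap_le (σ * restrictPerm θ S) a (θ a)
    have hr1ab : (MulAction.orbitRel (Subgroup.closure {σ, restrictPerm θ S}) H)
        a (θ a) := by
      obtain ⟨i, hi⟩ := hsc.symm
      exact ⟨⟨(σ * restrictPerm θ S) ^ i, zpow_mem (mul_mem hσ1 hρ1) i⟩, hi⟩
    have hr21 : ∀ x y,
        (MulAction.orbitRel (Subgroup.closure {σ, restrictPerm θ S'}) H) x y →
        (MulAction.orbitRel (Subgroup.closure {σ, restrictPerm θ S}) H) x y := by
      apply orbitRel_closure_le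
      intro g hg x
      simp only [Set.mem_insert_iff, Set.mem_singleton_iff] at hg
      rcases hg with rfl | rfl
      · exact orbitRel_apply_mem hσ1 x
      · by_cases hxa : x = a
        · subst hxa; rw [happa]; exact hr1ab
        · by_cases hxb : x = θ a
          · subst hxb; rw [happb]
            exact (MulAction.orbitRel _ H).iseqv.symm hr1ab
          · by_cases hxS : x ∈ S
            · rw [← happ x hxS]
              exact orbitRel_apply_mem hρ1 x
            · have : restrictPerm θ S' x = x := by
                rw [restrictPerm_apply θ S' hS' hinv,
                  if_neg (by simp [hS'def, hxa, hxb, hxS])]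
              rw [this]
    have hk2 : kCount σ θ S ≤ kCount σ θ S' := card_quot_le_of_imp hr21
    unfold genusZ nCount rCount
    rw [he]
    omega
  · -- different boundary cycles: bc drops, k drops by at most one
    have hbc : bcCount σ θ S' + 1 ≤ bcCount σ θ S := by
      rw [hbc']
      exact permOrbits_mul_swap_add_one_le (σ * restrictPerm θ S) a (θ a) hsc
    have hjoin : ∀ x y,
        (MulAction.orbitRel (Subgroup.closure {σ, restrictPerm θ S'}) H) x y →
        (joinPair (MulAction.orbitRel (Subgroup.closure {σ, restrictPerm θ S}) H)
          a (θ a)) x y := by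
      apply orbitRel_closure_le
      intro g hg x
      simp only [Set.mem_insert_iff, Set.mem_singleton_iff] at hg
      rcases hg with rfl | rfl
      · exact Or.inl (orbitRel_apply_mem hσ1 x)
      · by_cases hxa : x = a
        · rw [hxa, happa]
          exact Or.inr (Or.inl ⟨(MulAction.orbitRel _ H).iseqv.refl a,
            (MulAction.orbitRel _ H).iseqv.refl (θ a)⟩)
        · by_cases hxb : x = θ a
          · rw [hxb, happb]
            exact Or.inr (Or.inr ⟨(MulAction.orbitRel _ H).iseqv.refl (θ a),
              (MulAction.orbitRel _ H).iseqv.refl a⟩)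
          · by_cases hxS : x ∈ S
            · rw [← happ x hxS]
              exact Or.inl (orbitRel_apply_mem hρ1 x)
            · have : restrictPerm θ S' x = x := by
                rw [restrictPerm_apply θ S' hS' hinv,
                  if_neg (by simp [hS'def, hxa, hxb, hxS])]
              rw [this]
    have hk2 : kCount σ θ S ≤ kCount σ θ S' + 1 :=
      card_quot_le_succ a (θ a) hr12 hjoin
    unfold genusZ nCount rCount
    rw [he]
    omega
end Aux4
section Aux5
variable {H : Type*} [Fintype H] [DecidableEq H]

lemma genus_mono (σ θ : Equiv.Perm H)
    (hinv : ∀ x, θ (θ x) = x) (hfp : ∀ x, θ x ≠ x) :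
    ∀ n : ℕ, ∀ S T : Finset H, (∀ x ∈ S, θ x ∈ S) → (∀ x ∈ T, θ x ∈ T) →
      S ⊆ T → (T \ S).card = n → genusZ σ θ S ≤ genusZ σ θ T := by
  intro n
  induction n using Nat.strong_induction_on with
  | _ n ih =>
    intro S T hS hT hST hcard
    by_cases hEq : S = T
    · rw [hEq]
    · have hne : (T \ S).Nonempty := by
        rw [Finset.sdiff_nonempty]
        intro hTS
        exact hEq (Finset.Subset.antisymm hST hTS)
      obtain ⟨a, haTS⟩ := hne
      have haT : a ∈ T := (Finset.mem_sdiff.mp haTS).1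
      have haS : a ∉ S := (Finset.mem_sdiff.mp haTS).2
      have hsub : S ⊆ insert (θ a) (insert a S) := fun x hx =>
        Finset.mem_insert_of_mem (Finset.mem_insert_of_mem hx)
      have hS'sub : insert (θ a) (insert a S) ⊆ T := by
        intro x hx
        rcases Finset.mem_insert.mp hx with rfl | hx
        · exact hT a haT
        rcases Finset.mem_insert.mp hx with rfl | hx
        · exact haT
        · exact hST hx
      have hlt : (T \ insert (θ a) (insert a S)).card < n := by
        rw [← hcard]
        apply Finset.card_lt_card
        rw [Finset.ssubset_iff_of_subset
          (Finset.sdiff_subset_sdiff (Finset.Subset.refl T) hsub)]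
        exact ⟨a, haTS, by simp⟩
      exact le_trans (genus_step σ θ hinv hfp S hS a haS)
        (ih _ hlt _ T (insert_invariant θ S hS hinv a) hT hS'sub rfl)

lemma genusZ_empty (σ θ : Equiv.Perm H) (hinv : ∀ x, θ (θ x) = x) :
    genusZ σ θ (∅ : Finset H) = 0 := by
  have hρ : restrictPerm θ (∅ : Finset H) = 1 := by
    ext x
    rw [restrictPerm_apply θ ∅ (by simp) hinv]
    simp
  have hcl : Subgroup.closure ({σ, (1 : Equiv.Perm H)} : Set (Equiv.Perm H)) =
      Subgroup.zpowers σ := by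
    apply le_antisymm
    · rw [Subgroup.closure_le]
      rintro g hg
      simp only [Set.mem_insert_iff, Set.mem_singleton_iff] at hg
      rcases hg with rfl | rfl
      · exact Subgroup.mem_zpowers _
      · exact one_mem _
    · rw [Subgroup.zpowers_le]
      exact Subgroup.subset_closure (by simp)
  have hk : kCount σ θ (∅ : Finset H) = vCount σ := by
    unfold kCount vCount permOrbits
    rw [hρ, hcl]
  have hbc : bcCount σ θ (∅ : Finset H) = vCount σ := by
    unfold bcCount vCount
    rw [hρ, mul_one]
  unfold genusZ nCount rCount eCount
  rw [hk, hbc]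
  simp
end Aux5


/-- **Genus-zero lemma for spanning subgraphs.**  If an orientable ribbon graph
encoded by a combinatorial map `(H, σ, θ)` has genus zero, i.e.
`k(E) - bc(E) + n(E) = 0`, then `k(F) - bc(F) + n(F) = 0` for every spanning
subgraph `F ⊆ E` (encoded by a `θ`-invariant set `S` of half-edges). -/
theorem genus_zero_of_spanning_subgraph
    {H : Type*} [Fintype H] [DecidableEq H] (σ θ : Equiv.Perm H)
    (hinv : ∀ a, θ (θ a) = a) (hfp : ∀ a, θ a ≠ a)
    (hgenus : (kCount σ θ (Finset.univ : Finset H) : ℤ) -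
        (bcCount σ θ (Finset.univ : Finset H) : ℤ) +
        nCount σ θ (Finset.univ : Finset H) = 0) :
    ∀ S : Finset H, (∀ a ∈ S, θ a ∈ S) →
      (kCount σ θ S : ℤ) - (bcCount σ θ S : ℤ) + nCount σ θ S = 0 := by
  intro S hS
  have h1 : genusZ σ θ (∅ : Finset H) ≤ genusZ σ θ S :=
    genus_mono σ θ hinv hfp _ ∅ S (by simp) hS (Finset.empty_subset S) rfl
  have h2 : genusZ σ θ S ≤ genusZ σ θ (Finset.univ : Finset H) :=
    genus_mono σ θ hinv hfp _ S Finset.univ hS (by simp)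
      (Finset.subset_univ S) rfl
  have h0 := genusZ_empty σ θ hinv
  have huniv : genusZ σ θ (Finset.univ : Finset H) = 0 := hgenus
  have hfinal : genusZ σ θ S = 0 := le_antisymm (huniv ▸ h2) (h0 ▸ h1)
  exact hfinal
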